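/- Let X ∈ ℝ^{N×N} be symmetric positive semidefinite of rank r with eigenvalues λ₁ ≥ ⋯ ≥ λ_r > 0, let 1 ≤ k ≤ r, assume λ_{k+1} ≤ λ_k/12, let W_k ∈ ℝ^{N×k} have orthonormal columns that are eigenvectors of X for λ₁,…,λ_k, let Λ_k = diag(λ₁,…,λ_k), and U* = W_k Λ_k^{1/2}. Suppose U ∈ ℝ^{N×k} has full column rank and ‖UUᵀ‖_F > (8/7)‖U*U*ᵀ‖_F. Then ‖(UUᵀ − X)U‖_F > (5/84) k^{1/4} λ_k^{3/2}. -/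

import Mathlib

open Matrix

/-- Frobenius norm of a real matrix. -/
noncomputable def frob {m n : Type*} [Fintype m] [Fintype n] (M : Matrix m n ℝ) : ℝ :=
  Real.sqrt (∑ i, ∑ j, (M i j) ^ 2)

/-- Trace (entrywise) inner product of two real matrices. -/
noncomputable def mip {m n : Type*} [Fintype m] [Fintype n] (A B : Matrix m n ℝ) : ℝ :=
  ∑ i, ∑ j, A i j * B i j

section helpers
variable {m n p : Type*} [Fintype m] [Fintype n] [Fintype p]

lemma frob_eq_sqrt_mip (M : Matrix m n ℝ) : frob M = Real.sqrt (mip M M) := by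
  unfold frob mip
  congr 1
  exact Finset.sum_congr rfl fun i _ => Finset.sum_congr rfl fun j _ => sq (M i j)

lemma mip_nonneg_self (M : Matrix m n ℝ) : 0 ≤ mip M M := by
  unfold mip
  exact Finset.sum_nonneg fun i _ => Finset.sum_nonneg fun j _ => mul_self_nonneg _

lemma frob_nonneg (M : Matrix m n ℝ) : 0 ≤ frob M := Real.sqrt_nonneg _

lemma frob_sq (M : Matrix m n ℝ) : frob M ^ 2 = mip M M := by
  rw [frob_eq_sqrt_mip, Real.sq_sqrt (mip_nonneg_self M)]

lemma mip_comm (A B : Matrix m n ℝ) : mip A B = mip B A := by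
  unfold mip
  exact Finset.sum_congr rfl fun i _ => Finset.sum_congr rfl fun j _ => mul_comm _ _

lemma mip_transpose (A B : Matrix m n ℝ) : mip Aᵀ Bᵀ = mip A B := by
  unfold mip
  simp only [Matrix.transpose_apply]
  exact Finset.sum_comm (f := fun j i => A i j * B i j)

lemma mip_adjoint (B : Matrix m p ℝ) (V : Matrix p n ℝ) (C : Matrix m n ℝ) :
    mip (B * V) C = mip V (Bᵀ * C) := by
  unfold mip
  simp only [Matrix.mul_apply, Matrix.transpose_apply, Finset.sum_mul, Finset.mul_sum]
  calc (∑ i : m, ∑ c : n, ∑ q : p, B i q * V q c * C i c)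
      = ∑ i : m, ∑ q : p, ∑ c : n, B i q * V q c * C i c :=
        Finset.sum_congr rfl fun i _ => Finset.sum_comm
    _ = ∑ q : p, ∑ i : m, ∑ c : n, B i q * V q c * C i c := Finset.sum_comm
    _ = ∑ q : p, ∑ c : n, ∑ i : m, B i q * V q c * C i c :=
        Finset.sum_congr rfl fun q _ => Finset.sum_comm
    _ = ∑ q : p, ∑ c : n, ∑ i : m, V q c * (B i q * C i c) :=
        Finset.sum_congr rfl fun q _ => Finset.sum_congr rfl fun c _ =>
          Finset.sum_congr rfl fun i _ => by ring

lemma mip_adjoint_right (C : Matrix m n ℝ) (V : Matrix m p ℝ) (B : Matrix p n ℝ) :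
    mip C (V * B) = mip (C * Bᵀ) V := by
  rw [mip_comm, mip_adjoint, ← mip_transpose, Matrix.transpose_mul, Matrix.transpose_transpose,
    mip_adjoint]

lemma mip_le (A B : Matrix m n ℝ) : mip A B ≤ frob A * frob B := by
  unfold mip frob
  rw [← Fintype.sum_prod_type (f := fun x : m × n => A x.1 x.2 * B x.1 x.2)]
  rw [← Fintype.sum_prod_type (f := fun x : m × n => A x.1 x.2 ^ 2)]
  rw [← Fintype.sum_prod_type (f := fun x : m × n => B x.1 x.2 ^ 2)]
  exact Real.sum_mul_le_sqrt_mul_sqrt Finset.univ _ _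

lemma mip_sub_left (P Q C : Matrix m n ℝ) : mip (P - Q) C = mip P C - mip Q C := by
  unfold mip
  rw [← Finset.sum_sub_distrib]
  refine Finset.sum_congr rfl fun i _ => ?_
  rw [← Finset.sum_sub_distrib]
  exact Finset.sum_congr rfl fun j _ => by simp [Matrix.sub_apply]; ring

lemma mip_sub_self (P Q : Matrix m n ℝ) :
    mip (P - Q) (P - Q) = mip P P - 2 * mip P Q + mip Q Q := by
  unfold mip
  rw [Finset.mul_sum]
  rw [← Finset.sum_sub_distrib, ← Finset.sum_add_distrib]
  refine Finset.sum_congr rfl fun i _ => ?_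
  rw [Finset.mul_sum, ← Finset.sum_sub_distrib, ← Finset.sum_add_distrib]
  exact Finset.sum_congr rfl fun j _ => by simp [Matrix.sub_apply]; ring

lemma mip_mul_right (S : Matrix m m ℝ) (U : Matrix m n ℝ) :
    mip (S * U) U = mip Sᵀ (U * Uᵀ) := by
  rw [← mip_transpose, Matrix.transpose_mul, mip_adjoint, Matrix.transpose_transpose]

lemma mip_diag {ι : Type*} [Fintype ι] [DecidableEq ι]
    (W' : Matrix m ι ℝ) (d : ι → ℝ) (U : Matrix m n ℝ) :
    mip (W' * diagonal d * W'ᵀ) (U * Uᵀ) = ∑ q, d q * ∑ c, ((W'ᵀ * U) q c) ^ 2 := by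
  rw [Matrix.mul_assoc, mip_adjoint, ← Matrix.mul_assoc, mip_adjoint_right,
    Matrix.transpose_transpose]
  unfold mip
  simp only [Matrix.mul_assoc, Matrix.diagonal_mul]
  refine Finset.sum_congr rfl fun q _ => ?_
  rw [Finset.mul_sum]
  exact Finset.sum_congr rfl fun c _ => by rw [pow_two]; ring

lemma mip_self_proj {ι : Type*} [Fintype ι] [DecidableEq ι] (W' : Matrix m ι ℝ) (hW' : W'ᵀ * W' = 1)
    (U : Matrix m n ℝ) : mip (W'ᵀ * U) (W'ᵀ * U) ≤ mip U U := by
  have h0 := mip_nonneg_self (U - W' * (W'ᵀ * U))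
  rw [mip_sub_self] at h0
  have e1 : mip U (W' * (W'ᵀ * U)) = mip (W'ᵀ * U) (W'ᵀ * U) := by
    rw [mip_comm, mip_adjoint]
  have e2 : mip (W' * (W'ᵀ * U)) (W' * (W'ᵀ * U)) = mip (W'ᵀ * U) (W'ᵀ * U) := by
    rw [mip_adjoint, ← Matrix.mul_assoc, hW', Matrix.one_mul]
  linarith

lemma frob_transpose_mul_self (U : Matrix m n ℝ) : frob (Uᵀ * U) = frob (U * Uᵀ) := by
  have h1 : mip (Uᵀ * U) (Uᵀ * U) = mip U (U * (Uᵀ * U)) := by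
    rw [mip_adjoint, Matrix.transpose_transpose]
  have h3 : (U * (Uᵀ * U))ᵀ = Uᵀ * (U * Uᵀ) := by
    simp [Matrix.transpose_mul, Matrix.mul_assoc]
  have h2 : mip (U * Uᵀ) (U * Uᵀ) = mip U (U * (Uᵀ * U)) := by
    rw [mip_adjoint, ← h3, mip_transpose]
  rw [frob_eq_sqrt_mip, frob_eq_sqrt_mip, h1, h2]

end helpers

set_option maxHeartbeats 1000000 in
theorem stmt_12 {N r k : ℕ} (hk1 : 1 ≤ k) (hkr : k ≤ r)
    (W : Matrix (Fin N) (Fin r) ℝ) (lam : Fin r → ℝ)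
    (hW : Wᵀ * W = 1) (hpos : ∀ i, 0 < lam i)
    (hdesc : ∀ i j : Fin r, i ≤ j → lam j ≤ lam i)
    (X : Matrix (Fin N) (Fin N) ℝ) (hX : X = W * diagonal lam * Wᵀ)
    (hgap : (if h : k < r then lam ⟨k, h⟩ else 0) ≤ lam ⟨k - 1, by omega⟩ / 12)
    (Ustar : Matrix (Fin N) (Fin k) ℝ)
    (hUstar : Ustar = W.submatrix id (Fin.castLE hkr) *
      diagonal (fun j : Fin k => Real.sqrt (lam (Fin.castLE hkr j))))
    (U : Matrix (Fin N) (Fin k) ℝ) (hUrank : U.rank = k)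
    (hout : (8 / 7) * frob (Ustar * Ustarᵀ) < frob (U * Uᵀ)) :
    (5 / 84) * (k : ℝ) ^ ((1 : ℝ) / 4) * lam ⟨k - 1, by omega⟩ ^ ((3 : ℝ) / 2) <
      frob ((U * Uᵀ - X) * U) := by
  have hkr' : k - 1 < r := by omega
  set V : Matrix (Fin N) (Fin k) ℝ := W.submatrix id (Fin.castLE hkr) with hV
  set M : Matrix (Fin r) (Fin k) ℝ := Wᵀ * U with hM
  set lm : ℝ := lam ⟨k - 1, hkr'⟩ with hlmdef
  set a : ℝ := frob (U * Uᵀ) with ha_def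
  set L : ℝ := frob (Ustar * Ustarᵀ) with hL_def
  set u : ℝ := frob U with hu_def
  set g : ℝ := frob ((U * Uᵀ - X) * U) with hg_def
  set s : ℝ := Real.sqrt k with hs_def
  have hlm : 0 < lm := hpos _
  have hVV : Vᵀ * V = (1 : Matrix (Fin k) (Fin k) ℝ) := by
    ext q q'
    have h1 := congrFun (congrFun hW (Fin.castLE hkr q)) (Fin.castLE hkr q')
    simp only [Matrix.mul_apply, Matrix.transpose_apply, Matrix.one_apply] at h1 ⊢
    simp only [hV, Matrix.submatrix_apply, id_eq]
    rw [h1]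
    simp [Fin.castLE_inj]
  have hdd : (fun j : Fin k => Real.sqrt (lam (Fin.castLE hkr j)) *
      Real.sqrt (lam (Fin.castLE hkr j))) = fun q : Fin k => lam (Fin.castLE hkr q) := by
    funext q; exact Real.mul_self_sqrt (hpos _).le
  have hX1 : Ustar * Ustarᵀ = V * diagonal (fun q : Fin k => lam (Fin.castLE hkr q)) * Vᵀ := by
    rw [hUstar, Matrix.transpose_mul, Matrix.diagonal_transpose, Matrix.mul_assoc,
      ← Matrix.mul_assoc (diagonal _), Matrix.diagonal_mul_diagonal, hdd, ← Matrix.mul_assoc]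
  have hVU : Vᵀ * Ustar = diagonal (fun j : Fin k => Real.sqrt (lam (Fin.castLE hkr j))) := by
    rw [hUstar, ← Matrix.mul_assoc, hVV, Matrix.one_mul]
  have hL2 : L ^ 2 = ∑ q : Fin k, lam (Fin.castLE hkr q) ^ 2 := by
    rw [hL_def, frob_sq]
    nth_rewrite 1 [hX1]
    rw [mip_diag, hVU]
    refine Finset.sum_congr rfl fun q _ => ?_
    have he : ∀ c : Fin k, (diagonal (fun j : Fin k =>
        Real.sqrt (lam (Fin.castLE hkr j))) q c) ^ 2 =
        if q = c then lam (Fin.castLE hkr q) else 0 := by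
      intro c
      rw [Matrix.diagonal_apply]
      split_ifs with h
      · rw [Real.sq_sqrt (hpos _).le]
      · exact zero_pow (by norm_num)
    simp only [he, Finset.sum_ite_eq, Finset.mem_univ, if_true]
    rw [pow_two]
  have hL2ge : (k : ℝ) * lm ^ 2 ≤ L ^ 2 := by
    rw [hL2]
    have : ∀ q : Fin k, lm ^ 2 ≤ lam (Fin.castLE hkr q) ^ 2 := by
      intro q
      have hle : lm ≤ lam (Fin.castLE hkr q) := by
        apply hdesc
        rw [Fin.le_def]
        simp only [Fin.coe_castLE]
        omega
      nlinarith [hlm]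
    calc (k : ℝ) * lm ^ 2 = ∑ _q : Fin k, lm ^ 2 := by
          rw [Finset.sum_const, Finset.card_univ, Fintype.card_fin, nsmul_eq_mul]
      _ ≤ _ := Finset.sum_le_sum fun q _ => this q
  have hL0 : 0 ≤ L := frob_nonneg _
  have hs0 : 0 ≤ s := Real.sqrt_nonneg _
  have hs2 : s * s = (k : ℝ) := Real.mul_self_sqrt (Nat.cast_nonneg k)
  have hk1' : (1 : ℝ) ≤ (k : ℝ) := by exact_mod_cast hk1
  have hs1 : 1 ≤ s := by nlinarith
  have hsl : s * lm ≤ L := by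
    have hsq : (s * lm) ^ 2 ≤ L ^ 2 := by nlinarith
    nlinarith [mul_nonneg hs0 hlm.le, hL0]
  have hLpos : 0 < L := lt_of_lt_of_le (by nlinarith) hsl
  have ha : (8 / 7) * L < a := hout
  have ha0 : 0 < a := by nlinarith
  have hu0 : 0 < u := by
    rcases (frob_nonneg U).lt_or_eq with h | h
    · exact h
    exfalso
    have hUU : mip U U = 0 := by
      calc mip U U = frob U ^ 2 := (frob_sq U).symm
        _ = 0 := by rw [← h]; norm_num
    have hU0 : U = 0 := by
      ext i c
      have h2 : ∀ i ∈ Finset.univ, (0:ℝ) ≤ ∑ c, U i c * U i c :=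
        fun i _ => Finset.sum_nonneg fun c _ => mul_self_nonneg _
      have h3 := (Finset.sum_eq_zero_iff_of_nonneg h2).mp hUU i (Finset.mem_univ i)
      have h4 := (Finset.sum_eq_zero_iff_of_nonneg
        (fun c _ => mul_self_nonneg (U i c))).mp h3 c (Finset.mem_univ c)
      simpa using mul_self_eq_zero.mp h4
    have : a = 0 := by
      rw [ha_def, hU0]
      simp [frob]
    nlinarith
  have htrace : u ^ 2 ≤ s * a := by
    have h1 : u ^ 2 = ∑ c : Fin k, (Uᵀ * U) c c := by
      rw [hu_def, frob_sq]
      unfold mip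
      simp only [Matrix.mul_apply, Matrix.transpose_apply]
      exact Finset.sum_comm (f := fun i c => U i c * U i c)
    have hcs := Real.sum_mul_le_sqrt_mul_sqrt Finset.univ (fun _ : Fin k => (1:ℝ))
      (fun c => (Uᵀ * U) c c)
    simp only [one_mul, one_pow] at hcs
    have hone : (∑ _c : Fin k, (1:ℝ)) = (k : ℝ) := by
      rw [Finset.sum_const, Finset.card_univ, Fintype.card_fin, nsmul_eq_mul, mul_one]
    rw [hone] at hcs
    have hdiag : Real.sqrt (∑ c : Fin k, ((Uᵀ * U) c c) ^ 2) ≤ frob (Uᵀ * U) := by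
      apply Real.sqrt_le_sqrt
      refine Finset.sum_le_sum fun c _ => ?_
      exact Finset.single_le_sum (f := fun j => ((Uᵀ * U) c j) ^ 2)
        (fun j _ => sq_nonneg _) (Finset.mem_univ c)
    have h3 : frob (Uᵀ * U) = a := by rw [frob_transpose_mul_self]
    calc u ^ 2 = ∑ c : Fin k, (Uᵀ * U) c c := h1
      _ ≤ Real.sqrt (k : ℝ) * Real.sqrt (∑ c : Fin k, ((Uᵀ * U) c c) ^ 2) := hcs
      _ ≤ s * a := by
          rw [← hs_def] at *
          apply mul_le_mul_of_nonneg_left _ hs0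
          exact hdiag.trans_eq h3
  have hCS : mip ((U * Uᵀ - X) * U) U ≤ g * u := mip_le _ _
  have hXsym : Xᵀ = X := by
    rw [hX]
    rw [Matrix.transpose_mul, Matrix.transpose_mul, Matrix.diagonal_transpose,
      Matrix.transpose_transpose, Matrix.mul_assoc]
  have hgrad : mip ((U * Uᵀ - X) * U) U = mip (U * Uᵀ) (U * Uᵀ) - mip X (U * Uᵀ) := by
    rw [mip_mul_right, Matrix.transpose_sub, Matrix.transpose_mul,
      Matrix.transpose_transpose, hXsym, mip_sub_left]
  have haa : mip (U * Uᵀ) (U * Uᵀ) = a ^ 2 := (frob_sq _).symm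
  set t : Fin r → ℝ := fun p => ∑ c, (M p c) ^ 2 with htdef
  have htnn : ∀ p, 0 ≤ t p := fun p => Finset.sum_nonneg fun c _ => sq_nonneg _
  have hXA : mip X (U * Uᵀ) = ∑ p, lam p * t p := by
    rw [hX]; exact mip_diag W lam U
  have himg : (∑ q : Fin k, lam (Fin.castLE hkr q) * t (Fin.castLE hkr q)) =
      ∑ p : Fin r, (if p.val < k then lam p * t p else 0) := by
    rw [← Finset.sum_filter]
    have hset : Finset.univ.filter (fun p : Fin r => p.val < k) =
        Finset.univ.image (Fin.castLE hkr) := by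
      ext p
      simp only [Finset.mem_filter, Finset.mem_univ, true_and, Finset.mem_image]
      constructor
      · intro hp; exact ⟨⟨p.val, hp⟩, Fin.ext rfl⟩
      · rintro ⟨q, _, rfl⟩; simpa using q.isLt
    rw [hset, Finset.sum_image (fun x _ y _ h => by
      have := congrArg Fin.val h
      simp only [Fin.coe_castLE] at this
      exact Fin.ext this)]
  have hsplit : (∑ p, lam p * t p) =
      (∑ q : Fin k, lam (Fin.castLE hkr q) * t (Fin.castLE hkr q)) +
      ∑ p : Fin r, (if k ≤ p.val then lam p * t p else 0) := by
    rw [himg, ← Finset.sum_add_distrib]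
    refine Finset.sum_congr rfl fun p _ => ?_
    rcases lt_or_ge p.val k with h | h
    · simp [h, Nat.not_le.mpr h]
    · simp [Nat.not_lt.mpr h, h]
  have hX1A : mip (Ustar * Ustarᵀ) (U * Uᵀ) =
      ∑ q : Fin k, lam (Fin.castLE hkr q) * t (Fin.castLE hkr q) := by
    rw [hX1, mip_diag, htdef]
    refine Finset.sum_congr rfl fun q _ => ?_
    have harg : ∀ c, ((Vᵀ * U) q c) = M (Fin.castLE hkr q) c := by
      intro c
      simp [hM, hV, Matrix.mul_apply]
    simp only [harg]
  have hX1A_le : mip (Ustar * Ustarᵀ) (U * Uᵀ) ≤ L * a := mip_le _ _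
  have htail : (∑ p : Fin r, if k ≤ p.val then lam p * t p else 0) ≤ (lm / 12) * ∑ p, t p := by
    rw [Finset.mul_sum]
    refine Finset.sum_le_sum fun p _ => ?_
    split_ifs with h
    · have hkr2 : k < r := lt_of_le_of_lt h p.isLt
      have h1 : lam p ≤ lam ⟨k, hkr2⟩ := by
        apply hdesc
        rw [Fin.le_def]
        exact h
      have h2 : lam ⟨k, hkr2⟩ ≤ lm / 12 := by
        have := hgap
        rw [dif_pos hkr2] at this
        exact this
      exact mul_le_mul_of_nonneg_right (h1.trans h2) (htnn p)
    · exact mul_nonneg (by positivity) (htnn p)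
  have hMt : (∑ p, t p) ≤ u ^ 2 := by
    have hp := mip_self_proj W hW U
    have h1 : (∑ p, t p) = mip M M := by
      unfold mip
      exact Finset.sum_congr rfl fun p _ => Finset.sum_congr rfl fun c _ => pow_two _
    rw [h1, hu_def, frob_sq]
    exact hp
  have hXAle : mip X (U * Uᵀ) ≤ L * a + (lm / 12) * u ^ 2 := by
    rw [hXA, hsplit, ← hX1A]
    have h5 : (lm / 12) * (∑ p, t p) ≤ (lm / 12) * u ^ 2 :=
      mul_le_mul_of_nonneg_left hMt (by positivity)
    linarith [htail]
  have hG : a ^ 2 - (L * a + (L / 12) * a) ≤ g * u := by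
    have h6 : (lm / 12) * u ^ 2 ≤ (lm / 12) * (s * a) :=
      mul_le_mul_of_nonneg_left htrace (by positivity)
    have h7 : (lm / 12) * (s * a) ≤ (L / 12) * a := by nlinarith
    linarith [hCS, hgrad ▸ (le_refl (mip ((U * Uᵀ - X) * U) U)), haa, hXAle]
  have hkey : a * ((5 / 84) * L) < g * u := by
    have hmul : 8 / 7 * L * a < a * a := mul_lt_mul_of_pos_right ha ha0
    have hsq : a ^ 2 = a * a := sq a
    linarith
  have hK4 : ((k : ℝ) ^ ((1 : ℝ) / 4)) ^ 2 = s := by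
    rw [← Real.rpow_natCast ((k : ℝ) ^ ((1 : ℝ) / 4)) 2,
      ← Real.rpow_mul (Nat.cast_nonneg k), hs_def, Real.sqrt_eq_rpow]
    norm_num
  have h32 : (lm ^ ((3 : ℝ) / 2)) ^ 2 = lm ^ 3 := by
    rw [← Real.rpow_natCast (lm ^ ((3 : ℝ) / 2)) 2, ← Real.rpow_mul hlm.le,
      ← Real.rpow_natCast lm 3]
    norm_num
  have hlma : lm ≤ a := by
    have h1 : (1 : ℝ) * lm ≤ s * lm := mul_le_mul_of_nonneg_right hs1 hlm.le
    linarith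
  have hrhs_sq : ((k : ℝ) ^ ((1 : ℝ) / 4) * lm ^ ((3 : ℝ) / 2) * u) ^ 2 ≤ (L * a) ^ 2 := by
    have expand : ((k : ℝ) ^ ((1 : ℝ) / 4) * lm ^ ((3 : ℝ) / 2) * u) ^ 2 =
        s * lm ^ 3 * u ^ 2 := by
      rw [mul_pow, mul_pow, hK4, h32]
    rw [expand]
    have e1 : s * lm ^ 3 * u ^ 2 ≤ s * lm ^ 3 * (s * a) :=
      mul_le_mul_of_nonneg_left htrace (by positivity)
    have c1 : s * lm ^ 3 * (s * a) = (k : ℝ) * lm ^ 2 * (lm * a) := by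
      rw [← hs2]; ring
    have c2 : (k : ℝ) * lm ^ 2 * (lm * a) ≤ L ^ 2 * (lm * a) :=
      mul_le_mul_of_nonneg_right hL2ge (mul_nonneg hlm.le ha0.le)
    have c3 : L ^ 2 * (lm * a) ≤ L ^ 2 * (a * a) :=
      mul_le_mul_of_nonneg_left (mul_le_mul_of_nonneg_right hlma ha0.le) (sq_nonneg L)
    have c4 : (L * a) ^ 2 = L ^ 2 * (a * a) := by ring
    linarith
  have hrhs : (k : ℝ) ^ ((1 : ℝ) / 4) * lm ^ ((3 : ℝ) / 2) * u ≤ L * a := by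
    have h1 : 0 ≤ (k : ℝ) ^ ((1 : ℝ) / 4) * lm ^ ((3 : ℝ) / 2) * u := by positivity
    have h2 : 0 ≤ L * a := mul_nonneg hL0 ha0.le
    have h3 := Real.sqrt_le_sqrt hrhs_sq
    rwa [Real.sqrt_sq h1, Real.sqrt_sq h2] at h3
  have final : ((5 / 84) * ((k : ℝ) ^ ((1 : ℝ) / 4)) * lm ^ ((3 : ℝ) / 2)) * u < g * u := by
    calc ((5 / 84) * ((k : ℝ) ^ ((1 : ℝ) / 4)) * lm ^ ((3 : ℝ) / 2)) * u
        = (5 / 84) * ((k : ℝ) ^ ((1 : ℝ) / 4) * lm ^ ((3 : ℝ) / 2) * u) := by ring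
      _ ≤ (5 / 84) * (L * a) := by linarith
      _ = a * ((5 / 84) * L) := by ring
      _ < g * u := hkey
  exact lt_of_mul_lt_mul_right final hu0.le
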